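/- arXiv:1402.1464 — 2 statements merged into one kernel-verified Lean document; each statement's English description precedes it below -/
import Mathlib

section
/- Let α = (α₁, …, α_r) be a composition with 1 ≤ α_p < n for all p, and let ∅ = λ⁽⁰⁾ ⊆ λ⁽¹⁾ ⊆ ⋯ ⊆ λ⁽ʳ⁾ be n-cores such that (λ⁽ᵖ⁻¹⁾, λ⁽ᵖ⁾) is a horizontal strong (n−1−α_p)-strip for each 1 ≤ p ≤ r. Define μ⁽⁰⁾ = λ⁽ʳ⁾ and, for 1 ≤ p ≤ r, let μ⁽ᵖ⁾ be the sequence whose first p − 1 parts are λ⁽ʳ⁻ʲ⁾₁ + n − 1 for j = 1, …, p − 1 (in this order), followed by the parts of R(n−1, λ⁽ʳ⁻ᵖ⁾). Then each μ⁽ᵖ⁾ is a partition, μ⁽ᵖ⁻¹⁾ ⊆ μ⁽ᵖ⁾, and the skew shape μ⁽ᵖ⁾/μ⁽ᵖ⁻¹⁾ is a horizontal strip, for every 1 ≤ p ≤ r. -/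
open scoped Classical

/-- A partition: an antitone, eventually-zero sequence of row lengths.
Row `0` is the bottom row; `part i` is the length of row `i`. -/
structure YPartition where
  part : ℕ → ℕ
  antitone' : ∀ ⦃i j : ℕ⦄, i ≤ j → part j ≤ part i
  eventually_zero : ∃ N, ∀ i, N ≤ i → part i = 0

def emptyPartition : YPartition :=
  ⟨fun _ => 0, fun _ _ _ => le_rfl, ⟨0, fun _ _ => rfl⟩⟩

/-- Cells of a partition, 0-indexed: `(i, j)` is in row `i` (from the bottom), column `j`. -/
def cells (p : YPartition) : Set (ℕ × ℕ) := {c | c.2 < p.part c.1}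

/-- Containment of partitions. -/
def Included (p q : YPartition) : Prop := ∀ i, p.part i ≤ q.part i

/-- The skew shape `q/p`. -/
def skewCells (q p : YPartition) : Set (ℕ × ℕ) := cells q \ cells p

/-- The content of a cell. -/
def content (c : ℕ × ℕ) : ℤ := (c.2 : ℤ) - (c.1 : ℤ)

/-- The number of cells of `p` above `(i,j)` in column `j`. -/
noncomputable def legLen (p : YPartition) (i j : ℕ) : ℕ :=
  Nat.card {i' : ℕ // i < i' ∧ j < p.part i'}

/-- The hook length of the cell `(i,j)` of `p`. -/
noncomputable def hookLen (p : YPartition) (i j : ℕ) : ℕ :=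
  (p.part i - j) + legLen p i j

/-- An `n`-core: no cell has hook length `n`. -/
def IsCore (n : ℕ) (p : YPartition) : Prop :=
  ∀ i j : ℕ, j < p.part i → hookLen p i j ≠ n

/-- The degree of an `n`-core: the number of cells with hook length `< n`. -/
noncomputable def degCore (n : ℕ) (p : YPartition) : ℕ :=
  Nat.card {c : ℕ × ℕ // c ∈ cells p ∧ hookLen p c.1 c.2 < n}

/-- The covering relation of the strong (Bruhat) order on `n`-cores. -/
def StrongCover (n : ℕ) (p q : YPartition) : Prop :=
  IsCore n p ∧ IsCore n q ∧ Included p q ∧ degCore n q = degCore n p + 1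

/-- `q/p` is a horizontal strip: at most one cell in each column. -/
def IsHorizontalStrip (p q : YPartition) : Prop :=
  Included p q ∧ ∀ i, q.part (i + 1) ≤ p.part i

/-- The number of cells of a partition. -/
noncomputable def psize (p : YPartition) : ℕ := Nat.card {c : ℕ × ℕ // c ∈ cells p}

/-- The number of cells of the skew shape `q/p`. -/
noncomputable def skewSize (q p : YPartition) : ℕ := Nat.card {c : ℕ × ℕ // c ∈ skewCells q p}

/-- Edgewise adjacency of cells. -/
def AdjCells (c d : ℕ × ℕ) : Prop :=
  (c.1 = d.1 ∧ (c.2 + 1 = d.2 ∨ d.2 + 1 = c.2)) ∨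
  (c.2 = d.2 ∧ (c.1 + 1 = d.1 ∨ d.1 + 1 = c.1))

/-- A ribbon: a nonempty edgewise-connected set of cells with no 2×2 block. -/
def IsRibbon (S : Set (ℕ × ℕ)) : Prop :=
  S.Nonempty ∧
  (∀ c ∈ S, ∀ d ∈ S, Relation.ReflTransGen (fun x y => y ∈ S ∧ AdjCells x y) c d) ∧
  ∀ i j : ℕ, ¬ ((i, j) ∈ S ∧ (i + 1, j) ∈ S ∧ (i, j + 1) ∈ S ∧ (i + 1, j + 1) ∈ S)

/-- `c` is the head (southeasternmost cell) of `S`. -/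
def IsHead (S : Set (ℕ × ℕ)) (c : ℕ × ℕ) : Prop :=
  c ∈ S ∧ ∀ d ∈ S, c.1 ≤ d.1 ∧ d.2 ≤ c.2

/-- `c` is the tail (northwesternmost cell) of `S`. -/
def IsTail (S : Set (ℕ × ℕ)) (c : ℕ × ℕ) : Prop :=
  c ∈ S ∧ ∀ d ∈ S, d.1 ≤ c.1 ∧ c.2 ≤ d.2

/-- `S` is a connected component of `T` which is a ribbon (one of the ribbons of `T`). -/
def IsRibbonComponent (T S : Set (ℕ × ℕ)) : Prop :=
  S ⊆ T ∧ IsRibbon S ∧ ∀ c ∈ S, ∀ d ∈ T, AdjCells c d → d ∈ S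

/-- `R(n-1, p) = (p₁ + n - 1, p₁, p₂, …)`. -/
def Rtop (n : ℕ) (p : YPartition) : YPartition where
  part i := if i = 0 then p.part 0 + (n - 1) else p.part (i - 1)
  antitone' := by
    intro i j hij
    try dsimp only
    by_cases hj : j = 0
    · have hi : i = 0 := by omega
      simp [hi, hj]
    · by_cases hi : i = 0
      · simp only [hi, if_pos rfl, if_neg hj]
        exact le_trans (p.antitone' (Nat.zero_le _)) (Nat.le_add_right _ _)
      · simp only [if_neg hi, if_neg hj]
        exact p.antitone' (by omega)
  eventually_zero := by
    obtain ⟨N, hN⟩ := p.eventually_zero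
    refine ⟨N + 1, fun i hi => ?_⟩
    have hi0 : i ≠ 0 := by omega
    simp only [if_neg hi0]
    exact hN _ (by omega)

/-- `(λ, ν)` is a horizontal strong `m`-strip. -/
def IsHorizontalStrongStrip (n : ℕ) (lam nu : YPartition) (m : ℕ) : Prop :=
  Included lam nu ∧ m + degCore n nu = (n - 1) + degCore n lam ∧
  ∃ γ : ℕ → YPartition, γ 0 = nu ∧ γ m = Rtop n lam ∧
    ∀ i < m, StrongCover n (γ i) (γ (i + 1)) ∧ (γ i).part 0 < (γ (i + 1)).part 0

/-- A strong `m`-strip from `nu` to `gam` with chain `γ` and content vector `c 1, …, c m`. -/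
def IsStrongStrip (n m : ℕ) (nu gam : YPartition) (γ : ℕ → YPartition) (c : ℕ → ℤ) : Prop :=
  γ 0 = nu ∧ γ m = gam ∧
  (∀ i < m, StrongCover n (γ i) (γ (i + 1)) ∧
    ∃ S, IsRibbonComponent (skewCells (γ (i + 1)) (γ i)) S ∧
      ∃ h, IsHead S h ∧ content h = c (i + 1)) ∧
  ∀ i, 1 ≤ i → i < m → c i < c (i + 1)

/-- Ribbon strong strips (with prescribed target core `Rc` and prescribed column set). -/
def IsRibbonStrongStrip (n : ℕ) (nu Rc : YPartition) (cols : Set ℕ) (m : ℕ) : Prop :=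
  ∃ γ : ℕ → YPartition, γ 0 = nu ∧ γ m = Rc ∧
    ∀ i < m, StrongCover n (γ i) (γ (i + 1)) ∧
      ∃ S, IsRibbonComponent (skewCells (γ (i + 1)) (γ i)) S ∧
        ∃ t, IsTail S t ∧ t.2 ∈ cols

/- ### The affine symmetric group -/

/-- The underlying function of the simple reflection `s_i` of the affine symmetric group. -/
def sFun (n : ℕ) (i k : ℤ) : ℤ :=
  if (k - i) % n = 0 then k + 1 else if (k - i) % n = 1 then k - 1 else k

lemma one_emod_eq (n : ℕ) (hn : 2 ≤ n) : (1 : ℤ) % n = 1 :=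
  Int.emod_eq_of_lt (by norm_num) (by exact_mod_cast hn)

lemma sFun_involutive (n : ℕ) (hn : 2 ≤ n) (i : ℤ) : Function.Involutive (sFun n i) := by
  have h1n := one_emod_eq n hn
  intro k
  by_cases h0 : (k - i) % n = 0
  · have e1 : (k + 1 - i) % n = 1 := by
      have e : k + 1 - i = (k - i) + 1 := by ring
      rw [e, Int.add_emod, h0, h1n]
      simpa using h1n
    have hk : sFun n i k = k + 1 := by simp [sFun, h0]
    rw [hk]
    simp [sFun, e1]
  · by_cases h1 : (k - i) % n = 1
    · have e0 : (k - 1 - i) % n = 0 := by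
        have e : k - 1 - i = (k - i) - 1 := by ring
        rw [e, Int.sub_emod, h1, h1n]
        simp
      have hk : sFun n i k = k - 1 := by simp [sFun, h0, h1]
      rw [hk]
      simp [sFun, e0]
    · have hk : sFun n i k = k := by simp [sFun, h0, h1]
      rw [hk]
      simp [sFun, h0, h1]

/-- The simple reflection `s_i` (depending only on `i mod n`). -/
noncomputable def sRefl (n : ℕ) (hn : 2 ≤ n) (i : ℤ) : Equiv.Perm ℤ :=
  Function.Involutive.toPerm (sFun n i) (sFun_involutive n hn i)

/-- The product `s_{i₁} ⋯ s_{i_ℓ}` of the word `l = [i₁, …, i_ℓ]`. -/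
noncomputable def wordProd (n : ℕ) (hn : 2 ≤ n) (l : List ℤ) : Equiv.Perm ℤ :=
  (l.map (sRefl n hn)).prod

/-- The Coxeter length: minimal length of a word in the simple reflections. -/
noncomputable def alen (n : ℕ) (hn : 2 ≤ n) (w : Equiv.Perm ℤ) : ℕ :=
  sInf {m : ℕ | ∃ l : List ℤ, l.length = m ∧ w = wordProd n hn l}

def IsReducedWord (n : ℕ) (hn : 2 ≤ n) (w : Equiv.Perm ℤ) (l : List ℤ) : Prop :=
  w = wordProd n hn l ∧ l.length = alen n hn w

/-- Membership in the affine symmetric group. -/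
def IsAffinePerm (n : ℕ) (w : Equiv.Perm ℤ) : Prop :=
  (∀ k : ℤ, w (k + n) = w k + n) ∧
  (∑ i ∈ Finset.range n, w ((i : ℤ) + 1)) = ((n : ℤ) * (n + 1)) / 2

/-- Affine Grassmannian elements: minimal-length coset representatives of S̃ₙ/Sₙ. -/
def IsAffGrassmannian (n : ℕ) (hn : 2 ≤ n) (w : Equiv.Perm ℤ) : Prop :=
  IsAffinePerm n w ∧
  ∀ v ∈ Subgroup.closure {g : Equiv.Perm ℤ | ∃ i : ℤ, ¬ ((i : ℤ) % n = 0) ∧ g = sRefl n hn i},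
    alen n hn w ≤ alen n hn (w * v)

/-- An addable corner of `p` in row `r` (the cell `(r, p.part r)`). -/
def AddableCorner (p : YPartition) (r : ℕ) : Prop :=
  r = 0 ∨ p.part r < p.part (r - 1)

/-- The content of the addable corner of `p` in row `r`. -/
def cornerContent (p : YPartition) (r : ℕ) : ℤ := (p.part r : ℤ) - (r : ℤ)

/-- `q = s_i · p` : `q` is obtained from `p` by adding all addable corners of residue `i`. -/
def ActStep (n : ℕ) (i : ℤ) (p q : YPartition) : Prop :=
  (∃ r, AddableCorner p r ∧ (cornerContent p r - i) % n = 0) ∧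
  ∀ r, q.part r =
    if AddableCorner p r ∧ (cornerContent p r - i) % n = 0 then p.part r + 1 else p.part r

/-- `ActList n l p q` : `q = s_{i₁} · (s_{i₂} · ⋯ (s_{i_ℓ} · p))` for `l = [i₁, …, i_ℓ]`. -/
def ActList (n : ℕ) : List ℤ → YPartition → YPartition → Prop
  | [], p, q => q = p
  | i :: l, p, q => ∃ p', ActList n l p p' ∧ ActStep n i p' q

/-- `p = 𝔞(w)`: `p` is obtained by acting on the empty partition by a reduced word of `w`. -/
def ACoreOf (n : ℕ) (hn : 2 ≤ n) (w : Equiv.Perm ℤ) (p : YPartition) : Prop :=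
  ∃ l : List ℤ, IsReducedWord n hn w l ∧ ActList n l emptyPartition p

/-- `w_λ`: the affine Grassmannian element corresponding to the `n`-core `p`. -/
noncomputable def wOf (n : ℕ) (hn : 2 ≤ n) (p : YPartition) : Equiv.Perm ℤ :=
  if h : ∃ w : Equiv.Perm ℤ, IsAffGrassmannian n hn w ∧ ACoreOf n hn w p then h.choose else 1

/-- A cyclically decreasing word: pairwise distinct residues, and `i+1` precedes `i`. -/
def IsCDWord (n : ℕ) (l : List ℤ) : Prop :=
  l.Pairwise (fun a b : ℤ => ¬ ((a - b) % (n : ℤ) = 0) ∧ ¬ ((b - (a + 1)) % (n : ℤ) = 0))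

/-- A cyclically decreasing element of the affine symmetric group. -/
def IsCyclicallyDecreasing (n : ℕ) (hn : 2 ≤ n) (w : Equiv.Perm ℤ) : Prop :=
  ∃ l : List ℤ, IsReducedWord n hn w l ∧ IsCDWord n l

/-- The underlying function of the transposition `τ_{a,b}`. -/
def tauFun (n : ℕ) (a b k : ℤ) : ℤ :=
  if (k - a) % n = 0 then k + (b - a) else if (k - b) % n = 0 then k - (b - a) else k

lemma tauFun_involutive (n : ℕ) (a b : ℤ) (h : ¬ ((b - a) % n = 0)) :
    Function.Involutive (tauFun n a b) := by
  intro k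
  by_cases h0 : (k - a) % n = 0
  · have e1 : (k + (b - a) - a) % n = (b - a) % n := by
      have e : k + (b - a) - a = (k - a) + (b - a) := by ring
      rw [e, Int.add_emod, h0]
      simp [Int.emod_emod_of_dvd]
    have e2 : (k + (b - a) - b) % n = 0 := by
      have e : k + (b - a) - b = k - a := by ring
      rw [e]; exact h0
    have hk : tauFun n a b k = k + (b - a) := by simp [tauFun, h0]
    rw [hk]
    simp [tauFun, e1, e2, h]
  · by_cases h1 : (k - b) % n = 0
    · have e0 : (k - (b - a) - a) % n = 0 := by
        have e : k - (b - a) - a = k - b := by ring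
        rw [e]; exact h1
      have hk : tauFun n a b k = k - (b - a) := by simp [tauFun, h0, h1]
      rw [hk]
      simp [tauFun, e0]
    · have hk : tauFun n a b k = k := by simp [tauFun, h0, h1]
      rw [hk]
      simp [tauFun, h0, h1]

/-- The transposition `τ_{a,b}` of the affine symmetric group (`a ≢ b (mod n)`). -/
noncomputable def tauRefl (n : ℕ) (a b : ℤ) (h : ¬ ((b - a) % n = 0)) : Equiv.Perm ℤ :=
  Function.Involutive.toPerm (tauFun n a b) (tauFun_involutive n a b h)

/- ### The maps p and 𝔠, rectangles -/

/-- `pMap n γ i`: the number of cells in row `i` of `γ` with hook length `< n`. -/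
noncomputable def pMap (n : ℕ) (γ : YPartition) (i : ℕ) : ℕ :=
  Nat.card {j : ℕ // j < γ.part i ∧ hookLen γ i j < n}

/-- The number of parts of `f` that are `≥ t`. -/
noncomputable def numPartsGe (f : ℕ → ℕ) (t : ℕ) : ℕ := Nat.card {i : ℕ // t ≤ f i}

/-- The rectangle `R_r = (r^(n-r))`. -/
def rectPartition (n r : ℕ) : YPartition where
  part i := if i < n - r then r else 0
  antitone' := by
    intro i j hij
    try dsimp only
    by_cases hj : j < n - r
    · simp [hj, show i < n - r by omega]
    · simp [hj]
  eventually_zero := ⟨n - r, fun i hi => by simp [Nat.not_lt.mpr hi]⟩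

/-- The product `v r * v (r-1) * ⋯ * v 1`. -/
noncomputable def revProd (v : ℕ → Equiv.Perm ℤ) : ℕ → Equiv.Perm ℤ
  | 0 => 1
  | j + 1 => v (j + 1) * revProd v j

/-- The sequence `μ⁽ᵖ⁾`: first `p - 1` parts `λ⁽ʳ⁻ʲ⁾₁ + n - 1` (`j = 1, …, p-1`), followed by
the parts of `R(n-1, λ⁽ʳ⁻ᵖ⁾)`; and `μ⁽⁰⁾ = λ⁽ʳ⁾`. -/
noncomputable def muSeq (n r : ℕ) (lam : ℕ → YPartition) (p : ℕ) : ℕ → ℕ :=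
  if p = 0 then (lam r).part
  else fun i => if i + 1 < p then (lam (r - (i + 1))).part 0 + (n - 1)
                else (Rtop n (lam (r - p))).part (i - (p - 1))

lemma muSeq_zero' (n r : ℕ) (lam : ℕ → YPartition) (i : ℕ) :
    muSeq n r lam 0 i = (lam r).part i := by simp [muSeq]

lemma muSeq_low (n r : ℕ) (lam : ℕ → YPartition) {p i : ℕ} (hp : 1 ≤ p) (hi : i < p) :
    muSeq n r lam p i = (lam (r - (i + 1))).part 0 + (n - 1) := by
  have hp0 : p ≠ 0 := by omega
  simp only [muSeq, if_neg hp0]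
  by_cases h : i + 1 < p
  · simp [h]
  · have hip : i + 1 = p := by omega
    have h2 : i - (p - 1) = 0 := by omega
    simp only [if_neg h, h2, Rtop, if_pos rfl]
    rw [hip]
    simp

lemma muSeq_high (n r : ℕ) (lam : ℕ → YPartition) {p i : ℕ} (hp : 1 ≤ p) (hi : p ≤ i) :
    muSeq n r lam p i = (lam (r - p)).part (i - p) := by
  have hp0 : p ≠ 0 := by omega
  have h : ¬ (i + 1 < p) := by omega
  simp only [muSeq, if_neg hp0, if_neg h, Rtop]
  have h1 : i - (p - 1) ≠ 0 := by omega
  rw [if_neg h1]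
  congr 1
  omega

lemma included_of_strip {n : ℕ} {lam nu : YPartition} {m : ℕ}
    (h : IsHorizontalStrongStrip n lam nu m) : Included nu (Rtop n lam) := by
  obtain ⟨-, -, γ, hγ0, hγm, hcov⟩ := h
  have key : ∀ k, k ≤ m → Included (γ 0) (γ k) := by
    intro k
    induction k with
    | zero => intro _ i; exact le_rfl
    | succ k ih =>
      intro hk i
      exact le_trans (ih (by omega) i) (((hcov k (by omega)).1).2.2.1 i)
  rw [← hγ0, ← hγm]
  exact key m le_rfl

/-- Each `μ⁽ᵖ⁾` is a partition, `μ⁽ᵖ⁻¹⁾ ⊆ μ⁽ᵖ⁾`, and `μ⁽ᵖ⁾/μ⁽ᵖ⁻¹⁾` is a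
horizontal strip, for every `1 ≤ p ≤ r`. -/
theorem abc_rows_are_horizontal_strips
    (n : ℕ) (hn : 2 ≤ n) (r : ℕ) (α : ℕ → ℕ)
    (hα : ∀ p, 1 ≤ p → p ≤ r → 1 ≤ α p ∧ α p < n)
    (lam : ℕ → YPartition) (h0 : lam 0 = emptyPartition)
    (hcore : ∀ p, p ≤ r → IsCore n (lam p))
    (hstrip : ∀ p, 1 ≤ p → p ≤ r →
      IsHorizontalStrongStrip n (lam (p - 1)) (lam p) (n - 1 - α p)) :
    ∀ p, 1 ≤ p → p ≤ r →
      (∀ i j, i ≤ j → muSeq n r lam p j ≤ muSeq n r lam p i) ∧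
      (∃ N, ∀ i, N ≤ i → muSeq n r lam p i = 0) ∧
      (∀ i, muSeq n r lam (p - 1) i ≤ muSeq n r lam p i) ∧
      (∀ i, muSeq n r lam p (i + 1) ≤ muSeq n r lam (p - 1) i) := by
  -- Basic consequences of the strip hypothesis
  have F1 : ∀ q, 1 ≤ q → q ≤ r → ∀ i, (lam (q - 1)).part i ≤ (lam q).part i :=
    fun q h1 h2 => (hstrip q h1 h2).1
  have F2 : ∀ q, 1 ≤ q → q ≤ r → ∀ i, (lam q).part i ≤ (Rtop n (lam (q - 1))).part i :=
    fun q h1 h2 => included_of_strip (hstrip q h1 h2)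
  have F2a : ∀ q, 1 ≤ q → q ≤ r →
      (lam q).part 0 ≤ (lam (q - 1)).part 0 + (n - 1) := by
    intro q h1 h2
    have := F2 q h1 h2 0
    simpa [Rtop] using this
  have F2b : ∀ q, 1 ≤ q → q ≤ r → ∀ i,
      (lam q).part (i + 1) ≤ (lam (q - 1)).part i := by
    intro q h1 h2 i
    have := F2 q h1 h2 (i + 1)
    simpa [Rtop] using this
  have mono : ∀ a b : ℕ, a ≤ b → b ≤ r → ∀ i, (lam a).part i ≤ (lam b).part i := by
    intro a b hab
    induction b, hab using Nat.le_induction with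
    | base => intro _ i; exact le_rfl
    | succ b hb ih =>
      intro hbr i
      refine le_trans (ih (by omega) i) ?_
      have := F1 (b + 1) (by omega) hbr i
      simpa using this
  intro p hp hpr
  refine ⟨?_, ?_, ?_, ?_⟩
  · -- antitone
    intro i j hij
    rcases le_or_gt p j with hpj | hjp
    · rw [muSeq_high n r lam hp hpj]
      rcases le_or_gt p i with hpi | hip
      · rw [muSeq_high n r lam hp hpi]
        exact (lam (r - p)).antitone' (by omega)
      · rw [muSeq_low n r lam hp hip]
        refine le_trans ((lam (r - p)).antitone' (Nat.zero_le _)) ?_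
        refine le_trans (mono (r - p) (r - (i + 1)) (by omega) (by omega) 0) ?_
        exact Nat.le_add_right _ _
    · have hip : i < p := lt_of_le_of_lt hij hjp
      rw [muSeq_low n r lam hp hjp, muSeq_low n r lam hp hip]
      have := mono (r - (j + 1)) (r - (i + 1)) (by omega) (by omega) 0
      omega
  · -- eventually zero
    obtain ⟨N, hN⟩ := (lam (r - p)).eventually_zero
    refine ⟨N + p, fun i hi => ?_⟩
    rw [muSeq_high n r lam hp (by omega)]
    exact hN _ (by omega)
  · -- inclusion
    intro i
    rcases Nat.eq_or_lt_of_le hp with hp1 | hp2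
    · -- p = 1
      rw [← hp1]
      simp only [Nat.sub_self, muSeq_zero']
      rcases Nat.eq_zero_or_pos i with h0 | h1
      · subst h0
        rw [muSeq_low n r lam le_rfl (by omega)]
        have := F2a r (by omega) le_rfl
        simpa using this
      · rw [muSeq_high n r lam le_rfl h1]
        have := F2b r (by omega) le_rfl (i - 1)
        have hi1 : i - 1 + 1 = i := by omega
        rw [hi1] at this
        refine le_trans this ?_
        exact (lam (r - 1)).antitone' (by omega)
    · -- p ≥ 2
      have hq : 1 ≤ p - 1 := by omega
      rcases lt_or_ge i (p - 1) with hlow | hhigh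
      · rw [muSeq_low n r lam hq hlow, muSeq_low n r lam hp (by omega)]
      · rcases Nat.eq_or_lt_of_le hhigh with heq | hlt
        · -- i = p - 1
          rw [muSeq_high n r lam hq hhigh, muSeq_low n r lam hp (by omega)]
          have := F2a (r - (p - 1)) (by omega) (by omega)
          have e1 : r - (p - 1) - 1 = r - p := by omega
          have e2 : i - (p - 1) = 0 := by omega
          have e3 : r - (i + 1) = r - p := by omega
          rw [e1] at this
          rw [e2, e3]
          exact this
        · -- i ≥ p
          rw [muSeq_high n r lam hq hhigh, muSeq_high n r lam hp (by omega)]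
          have := F2b (r - (p - 1)) (by omega) (by omega) (i - p)
          have e1 : r - (p - 1) - 1 = r - p := by omega
          have e2 : i - p + 1 = i - (p - 1) := by omega
          rw [e1, e2] at this
          exact this
  · -- horizontal strip
    intro i
    rcases Nat.eq_or_lt_of_le hp with hp1 | hp2
    · rw [← hp1]
      simp only [Nat.sub_self, muSeq_zero']
      rw [muSeq_high n r lam le_rfl (by omega)]
      have := F1 r (by omega) le_rfl i
      simpa using this
    · have hq : 1 ≤ p - 1 := by omega
      rcases lt_or_ge (i + 1) p with hlow | hhigh
      · -- i + 1 < p, so i < p - 1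
        rw [muSeq_low n r lam hp hlow, muSeq_low n r lam hq (by omega)]
        have := mono (r - (i + 1 + 1)) (r - (i + 1)) (by omega) (by omega) 0
        omega
      · rcases lt_or_ge i (p - 1) with h1 | h2
        · -- i + 1 = p, i = p - 1... then i < p - 1? no: i + 1 ≥ p and i < p - 1 impossible
          omega
        · rcases Nat.eq_or_lt_of_le h2 with heq | hlt
          · -- i = p - 1 : μ^p(p) vs μ^{p-1}(p-1)
            rw [muSeq_high n r lam hp (by omega), muSeq_high n r lam hq h2]
            have := mono (r - p) (r - (p - 1)) (by omega) (by omega) 0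
            have e1 : i + 1 - p = 0 := by omega
            have e2 : i - (p - 1) = 0 := by omega
            rw [e1, e2]
            exact this
          · -- i ≥ p
            rw [muSeq_high n r lam hp (by omega), muSeq_high n r lam hq h2]
            have := mono (r - p) (r - (p - 1)) (by omega) (by omega) (i - (p - 1))
            have e2 : i + 1 - p = i - (p - 1) := by omega
            rw [e2]
            exact this
end

section
/- Let λ, μ ∈ P^n be partitions of the same size, with μ = (μ₁ ≥ ⋯ ≥ μ_r > 0). If there exists a sequence of n-cores ∅ = λ⁽⁰⁾ ⊆ λ⁽¹⁾ ⊆ ⋯ ⊆ λ⁽ʳ⁾ = 𝔠(λ) such that (λ⁽ⁱ⁻¹⁾, λ⁽ⁱ⁾) is a horizontal strong (n−1−μ_i)-strip for every 1 ≤ i ≤ r, then μ is dominated by λ, i.e., μ₁ + ⋯ + μ_s ≤ λ₁ + ⋯ + λ_s for all s ≥ 1. -/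
open scoped Classical

/- ### Auxiliary lemmas for the proof -/

lemma included_trans {p q r : YPartition} (h1 : Included p q) (h2 : Included q r) :
    Included p r := fun i => le_trans (h1 i) (h2 i)

lemma legLen_set_finite (p : YPartition) (i j : ℕ) :
    {i' : ℕ | i < i' ∧ j < p.part i'}.Finite := by
  obtain ⟨N, hN⟩ := p.eventually_zero
  apply (Set.finite_Iio N).subset
  intro x hx
  obtain ⟨_, h2⟩ := hx
  simp only [Set.mem_Iio]
  by_contra h
  have := hN x (by omega)
  omega

lemma legLen_eq_ncard (p : YPartition) (i j : ℕ) :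
    legLen p i j = {i' : ℕ | i < i' ∧ j < p.part i'}.ncard :=
  Nat.card_coe_set_eq _

lemma legLen_le (p : YPartition) (i j t : ℕ) (h : p.part (i + t + 1) ≤ j) :
    legLen p i j ≤ t := by
  rw [legLen_eq_ncard]
  have hsub : {i' : ℕ | i < i' ∧ j < p.part i'} ⊆ Set.Ioc i (i + t) := by
    intro x hx
    obtain ⟨h1, h2⟩ := hx
    refine ⟨h1, ?_⟩
    by_contra hc
    have : p.part x ≤ p.part (i + t + 1) := p.antitone' (by omega)
    omega
  calc {i' : ℕ | i < i' ∧ j < p.part i'}.ncard ≤ (Set.Ioc i (i + t)).ncard :=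
        Set.ncard_le_ncard hsub (Set.finite_Ioc _ _)
    _ = t := by
        rw [← Finset.coe_Ioc, Set.ncard_coe_finset, Nat.card_Ioc]; omega

lemma legLen_ge (p : YPartition) (i j t : ℕ) (h : j < p.part (i + t)) :
    t ≤ legLen p i j := by
  rw [legLen_eq_ncard]
  have hsub : Set.Ioc i (i + t) ⊆ {i' : ℕ | i < i' ∧ j < p.part i'} := by
    intro x hx
    obtain ⟨h1, h2⟩ := hx
    exact ⟨h1, lt_of_lt_of_le h (p.antitone' h2)⟩
  calc t = (Set.Ioc i (i + t)).ncard := by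
        rw [← Finset.coe_Ioc, Set.ncard_coe_finset, Nat.card_Ioc]; omega
    _ ≤ _ := Set.ncard_le_ncard hsub (legLen_set_finite p i j)

lemma pMap_eq_ncard (n : ℕ) (p : YPartition) (i : ℕ) :
    pMap n p i = {j : ℕ | j < p.part i ∧ hookLen p i j < n}.ncard :=
  Nat.card_coe_set_eq _

lemma hookLen_def (p : YPartition) (i j : ℕ) :
    hookLen p i j = (p.part i - j) + legLen p i j := rfl

/-- Main structural lemma: for an `n`-core `p` and any row `i` there is a unique
`m ≥ 1` with `β(i+m) = β(i) - n`, and `pMap n p i = n - m`. -/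
lemma core_exists_m (n : ℕ) (hn : 1 ≤ n) (p : YPartition) (hp : IsCore n p) (i : ℕ) :
    ∃ m, 1 ≤ m ∧ p.part (i + m) + n = p.part i + m ∧ pMap n p i + m = n := by
  classical
  have hP : ∃ k, p.part (i + k) + n ≤ p.part i + k :=
    ⟨n, by have := p.antitone' (Nat.le_add_right i n); omega⟩
  set m := Nat.find hP with hmdef
  have hm : p.part (i + m) + n ≤ p.part i + m := Nat.find_spec hP
  have hm0 : m ≠ 0 := by
    intro h0
    rw [h0] at hm
    simp only [Nat.add_zero] at hm
    omega
  obtain ⟨m', hmm⟩ : ∃ m', m = m' + 1 := ⟨m - 1, by omega⟩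
  have hnot : p.part i + m' < p.part (i + m') + n := by
    have := Nat.find_min hP (m := m') (by omega)
    omega
  have hm' : p.part (i + m' + 1) + n ≤ p.part i + (m' + 1) := by
    have : p.part (i + m' + 1) = p.part (i + (m' + 1)) := rfl
    rw [this]
    rw [hmm] at hm
    exact hm
  have hmn : m' < n := by
    have := p.antitone' (Nat.le_add_right i m')
    omega
  have heq : p.part (i + m' + 1) + n = p.part i + (m' + 1) := by
    rcases eq_or_lt_of_le hm' with h | h
    · exact h
    · exfalso
      have hge : n ≤ p.part i + m' := by omega
      set j := p.part i + m' - n with hj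
      have hj1 : p.part (i + m' + 1) ≤ j := by omega
      have hj2 : j < p.part (i + m') := by omega
      have hjlt : j < p.part i := by
        have : p.part (i + m') ≤ p.part i := p.antitone' (by omega)
        omega
      have hleg : legLen p i j = m' :=
        le_antisymm (legLen_le p i j m' hj1) (legLen_ge p i j m' hj2)
      have hhook : hookLen p i j = n := by
        rw [hookLen_def, hleg]
        omega
      exact hp i j hjlt hhook
  -- now compute pMap
  set j0 := p.part (i + m' + 1) with hj0
  have hj0le : j0 ≤ p.part i := p.antitone' (by omega)
  have hset : {j : ℕ | j < p.part i ∧ hookLen p i j < n} = Set.Ico j0 (p.part i) := by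
    ext j
    simp only [Set.mem_setOf_eq, Set.mem_Ico]
    constructor
    · rintro ⟨hjp, hhook⟩
      refine ⟨?_, hjp⟩
      by_contra hc
      have hleg : m' + 1 ≤ legLen p i j :=
        legLen_ge p i j (m' + 1) (show j < p.part (i + m' + 1) by omega)
      rw [hookLen_def] at hhook
      omega
    · rintro ⟨h0, hjp⟩
      refine ⟨hjp, ?_⟩
      have hleg : legLen p i j ≤ m' := legLen_le p i j m' (by omega)
      rw [hookLen_def]
      omega
  have hcard : pMap n p i = p.part i - j0 := by
    rw [pMap_eq_ncard, hset, ← Finset.coe_Ico, Set.ncard_coe_finset, Nat.card_Ico]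
  exact ⟨m' + 1, by omega, heq, by omega⟩

/-- Pointwise monotonicity of `pMap` for cores `p ⊆ q` with `q ⊆ R(n-1,p)`-type
interlacing `q.part (j+1) ≤ p.part j`. -/
lemma pMap_mono_strip (n : ℕ) (hn : 2 ≤ n) (p q : YPartition)
    (hp : IsCore n p) (hq : IsCore n q) (hinc : Included p q)
    (hint : ∀ j, q.part (j + 1) ≤ p.part j) (i : ℕ) :
    pMap n p i ≤ pMap n q i := by
  obtain ⟨a, ha1, ha2, ha3⟩ := core_exists_m n (by omega) p hp i
  obtain ⟨b, hb1, hb2, hb3⟩ := core_exists_m n (by omega) q hq i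
  have hba : b ≤ a := by
    by_contra hc
    push_neg at hc
    have h1 : q.part (i + b) ≤ q.part (i + a + 1) := q.antitone' (by omega)
    have h2 : q.part (i + a + 1) ≤ p.part (i + a) := hint (i + a)
    have h3 : p.part i ≤ q.part i := hinc i
    omega
  omega

lemma strip_interlace (n m : ℕ) (a b : YPartition)
    (h : ∃ g : ℕ → YPartition, g 0 = b ∧ g m = Rtop n a ∧
      ∀ i < m, StrongCover n (g i) (g (i + 1)) ∧ (g i).part 0 < (g (i + 1)).part 0) :
    ∀ j, b.part (j + 1) ≤ a.part j := by
  obtain ⟨g, hg0, hgm, hcov⟩ := h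
  have key : ∀ k, k ≤ m → Included b (g k) := by
    intro k
    induction k with
    | zero => intro _; rw [hg0]; exact fun i => le_rfl
    | succ k ih =>
      intro hk
      exact included_trans (ih (by omega)) ((hcov k (by omega)).1.2.2.1)
  have hbr := key m le_rfl
  rw [hgm] at hbr
  intro j
  have h2 := hbr (j + 1)
  simpa [Rtop] using h2

lemma pMap_eq_filter_card (n : ℕ) (p : YPartition) (i : ℕ) :
    pMap n p i = ((Finset.range (p.part i)).filter (fun j => hookLen p i j < n)).card := by
  rw [pMap_eq_ncard]
  have hs : {j : ℕ | j < p.part i ∧ hookLen p i j < n}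
      = ↑((Finset.range (p.part i)).filter (fun j => hookLen p i j < n)) := by
    ext j
    simp [Finset.mem_filter, Finset.mem_range]
  rw [hs, Set.ncard_coe_finset]

lemma degCore_eq_sum (n : ℕ) (p : YPartition) (N : ℕ) (hN : ∀ i, N ≤ i → p.part i = 0) :
    degCore n p = ∑ i ∈ Finset.range N, pMap n p i := by
  classical
  set F := (Finset.range N ×ˢ Finset.range (p.part 0)).filter
      (fun c : ℕ × ℕ => c.2 < p.part c.1 ∧ hookLen p c.1 c.2 < n) with hF
  have hmemF : ∀ c : ℕ × ℕ, c ∈ F ↔ c.1 < N ∧ c.2 < p.part 0 ∧ c.2 < p.part c.1 ∧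
      hookLen p c.1 c.2 < n := by
    intro c
    rw [hF, Finset.mem_filter, Finset.mem_product]
    simp only [Finset.mem_range]
    tauto
  have hsetF : {c : ℕ × ℕ | c ∈ cells p ∧ hookLen p c.1 c.2 < n} = ↑F := by
    ext c
    simp only [Set.mem_setOf_eq, Finset.mem_coe, hmemF, cells]
    constructor
    · rintro ⟨h1, h2⟩
      have ha : c.1 < N := by
        by_contra hcc
        rw [hN c.1 (by omega)] at h1
        omega
      exact ⟨ha, lt_of_lt_of_le h1 (p.antitone' (Nat.zero_le c.1)), h1, h2⟩
    · rintro ⟨_, _, h1, h2⟩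
      exact ⟨h1, h2⟩
  have hdeg0 : degCore n p = {c : ℕ × ℕ | c ∈ cells p ∧ hookLen p c.1 c.2 < n}.ncard :=
    Nat.card_coe_set_eq _
  have hdeg : degCore n p = F.card := by
    rw [hdeg0, hsetF, Set.ncard_coe_finset]
  rw [hdeg]
  rw [Finset.card_eq_sum_card_fiberwise (f := fun c : ℕ × ℕ => c.1) (t := Finset.range N)
    (fun c hc => Finset.mem_range.mpr ((hmemF c).mp hc).1)]
  refine Finset.sum_congr rfl fun i hi => ?_
  rw [pMap_eq_filter_card]
  have himg : F.filter (fun c => c.1 = i) =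
      ((Finset.range (p.part i)).filter (fun j => hookLen p i j < n)).image (fun j => (i, j)) := by
    ext c
    rw [Finset.mem_filter, hmemF]
    simp only [Finset.mem_image, Finset.mem_filter, Finset.mem_range]
    constructor
    · rintro ⟨⟨h1, h2, h3, h4⟩, h5⟩
      exact ⟨c.2, ⟨h5 ▸ h3, h5 ▸ h4⟩, by rw [← h5]⟩
    · rintro ⟨j, ⟨hj1, hj2⟩, hje⟩
      have hc1 : c.1 = i := by rw [← hje]
      have hc2 : c.2 = j := by rw [← hje]
      subst hc1; subst hc2
      exact ⟨⟨Finset.mem_range.mp hi, lt_of_lt_of_le hj1 (p.antitone' (Nat.zero_le _)), hj1, hj2⟩, rfl⟩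
  rw [himg, Finset.card_image_of_injective _ (fun x y hxy => by simpa using hxy)]

/-- If an `ABC`-type sequence of horizontal strong strips of weight `μ` and
shape `𝔠(λ)` exists, then `μ` is dominated by `λ`. -/
theorem strip_sequence_implies_dominance
    (n : ℕ) (hn : 2 ≤ n) (lam mu : YPartition)
    (hlamPn : ∀ i, lam.part i < n) (hmuPn : ∀ i, mu.part i < n)
    (hsize : psize lam = psize mu) (r : ℕ)
    (hpos : ∀ i < r, 0 < mu.part i) (hzero : ∀ i, r ≤ i → mu.part i = 0)
    (γ : YPartition) (hγcore : IsCore n γ) (hγ : ∀ i, pMap n γ i = lam.part i)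
    (f : ℕ → YPartition) (hf0 : f 0 = emptyPartition) (hfr : f r = γ)
    (hfcore : ∀ i, i ≤ r → IsCore n (f i))
    (hstrip : ∀ i < r, IsHorizontalStrongStrip n (f i) (f (i + 1)) (n - 1 - mu.part i)) :
    ∀ s : ℕ, ∑ i ∈ Finset.range s, mu.part i ≤ ∑ i ∈ Finset.range s, lam.part i := by
    classical
  -- interlacing per strip
  have hint : ∀ i, i < r → ∀ j, (f (i + 1)).part (j + 1) ≤ (f i).part j := by
    intro i hi
    exact strip_interlace n (n - 1 - mu.part i) (f i) (f (i + 1)) (hstrip i hi).2.2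
  have hinc : ∀ i, i < r → Included (f i) (f (i + 1)) := fun i hi => (hstrip i hi).1
  -- degrees
  have hdeg : ∀ s, s ≤ r → degCore n (f s) = ∑ i ∈ Finset.range s, mu.part i := by
    intro s
    induction s with
    | zero =>
      intro _
      rw [hf0, degCore_eq_sum n emptyPartition 0 (fun i _ => rfl)]
      simp
    | succ s ih =>
      intro hs
      have h1 := ih (by omega)
      have h2 := (hstrip s (by omega)).2.1
      have h3 : mu.part s < n := hmuPn s
      rw [Finset.sum_range_succ, ← h1]
      omega
  -- parts vanish
  have hvan : ∀ s, s ≤ r → ∀ j, s ≤ j → (f s).part j = 0 := by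
    intro s
    induction s with
    | zero => intro _ j _; rw [hf0]; rfl
    | succ s ih =>
      intro hs j hj
      obtain ⟨j', rfl⟩ : ∃ j', j = j' + 1 := ⟨j - 1, by omega⟩
      have h1 := hint s (by omega) j'
      have h0 := ih (by omega) j' (by omega)
      omega
  -- pMap chain
  have hchain : ∀ j s, s ≤ r → pMap n (f s) j ≤ pMap n γ j := by
    intro j s hs
    have key : ∀ t, s ≤ t → t ≤ r → pMap n (f s) j ≤ pMap n (f t) j := by
      intro t
      induction t with
      | zero =>
        intro h1 _
        have hs0 : s = 0 := Nat.le_zero.mp h1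
        rw [hs0]
      | succ t ih =>
        intro h1 h2
        rcases Nat.lt_or_ge s (t + 1) with h | h
        · refine le_trans (ih (by omega) (by omega)) ?_
          exact pMap_mono_strip n hn (f t) (f (t + 1)) (hfcore t (by omega))
            (hfcore (t + 1) (by omega)) (hinc t (by omega)) (hint t (by omega)) j
        · have hst : s = t + 1 := by omega
          rw [hst]
    have := key r hs le_rfl
    rwa [hfr] at this
  -- main inequality for s ≤ r
  have hmain : ∀ s, s ≤ r →
      ∑ i ∈ Finset.range s, mu.part i ≤ ∑ i ∈ Finset.range s, lam.part i := by
    intro s hs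
    have e1 : ∑ i ∈ Finset.range s, mu.part i = degCore n (f s) := (hdeg s hs).symm
    have e2 : degCore n (f s) = ∑ j ∈ Finset.range s, pMap n (f s) j :=
      degCore_eq_sum n (f s) s (hvan s hs)
    rw [e1, e2]
    calc ∑ j ∈ Finset.range s, pMap n (f s) j ≤ ∑ j ∈ Finset.range s, pMap n γ j :=
          Finset.sum_le_sum fun j _ => hchain j s hs
      _ = ∑ j ∈ Finset.range s, lam.part j := Finset.sum_congr rfl fun j _ => hγ j
  intro s
  rcases le_or_gt s r with hs | hs
  · exact hmain s hs
  · have e1 : ∑ i ∈ Finset.range s, mu.part i = ∑ i ∈ Finset.range r, mu.part i :=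
      (Finset.sum_subset (Finset.range_subset_range.mpr hs.le)
        (fun x _ hx => hzero x (by simpa using hx))).symm
    rw [e1]
    calc ∑ i ∈ Finset.range r, mu.part i ≤ ∑ i ∈ Finset.range r, lam.part i := hmain r le_rfl
      _ ≤ ∑ i ∈ Finset.range s, lam.part i :=
          Finset.sum_le_sum_of_subset (Finset.range_subset_range.mpr hs.le)
end
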